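/- Let k, m, u > 0, set y₂ = u/m, y₃ = (√(1+4k) − 1)/(2k) and u₀ = m·y₃. The Jacobian matrix of the vector field (x/(1+ky) − xy, xy² − my + u) at the boundary equilibrium (0, y₂) is the lower-triangular matrix [[1/(1+ky₂) − y₂, 0], [y₂², −m]], whose eigenvalues are λ₁ = 1/(1+ky₂) − y₂ and λ₂ = −m < 0. Moreover: if u < u₀ then λ₁ > 0; if u > u₀ then λ₁ < 0; and if u = u₀ then λ₁ = 0. -/

import Mathlib

/-- At the boundary equilibrium `(0, y₂)` with `y₂ = u/m`, the Jacobian of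
the vector field `(x/(1+ky) - xy, xy² - my + u)` is the lower-triangular
matrix `[[1/(1+ky₂) - y₂, 0], [y₂², -m]]` with eigenvalues
`λ₁ = 1/(1+ky₂) - y₂` and `λ₂ = -m < 0`; moreover `λ₁ > 0` iff `u < u₀`,
`λ₁ < 0` iff `u > u₀`, and `λ₁ = 0` iff `u = u₀` (in the directions stated). -/
theorem stmt6 (k m u : ℝ) (hk : 0 < k) (hm : 0 < m) (hu : 0 < u)
    (y₂ y₃ u₀ : ℝ)
    (hy₂ : y₂ = u / m)
    (hy₃ : y₃ = (Real.sqrt (1 + 4 * k) - 1) / (2 * k))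
    (hu₀ : u₀ = m * y₃) :
    (∀ v : ℝ × ℝ,
        fderiv ℝ (fun p : ℝ × ℝ =>
          (p.1 / (1 + k * p.2) - p.1 * p.2,
            p.1 * p.2 ^ 2 - m * p.2 + u)) (0, y₂) v
          = ((1 / (1 + k * y₂) - y₂) * v.1,
              y₂ ^ 2 * v.1 + (-m) * v.2)) ∧
      -m < 0 ∧
      (u < u₀ → 0 < 1 / (1 + k * y₂) - y₂) ∧
      (u₀ < u → 1 / (1 + k * y₂) - y₂ < 0) ∧
      (u = u₀ → 1 / (1 + k * y₂) - y₂ = 0) := by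
  have hy₂pos : 0 < y₂ := by rw [hy₂]; positivity
  have hcpos : 0 < 1 + k * y₂ := by positivity
  have hcne : (1 + k * y₂) ≠ 0 := ne_of_gt hcpos
  have hs : Real.sqrt (1 + 4 * k) ^ 2 = 1 + 4 * k := Real.sq_sqrt (by linarith)
  have hsnn : 0 ≤ Real.sqrt (1 + 4 * k) := Real.sqrt_nonneg _
  have hs1 : 1 < Real.sqrt (1 + 4 * k) := by nlinarith
  have hy₃pos : 0 < y₃ := by
    rw [hy₃]; exact div_pos (by linarith) (by positivity)
  have hroot : k * y₃ ^ 2 + y₃ = 1 := by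
    rw [hy₃]; field_simp; nlinarith [Real.sq_sqrt (show (0:ℝ) ≤ 1 + k * 4 by linarith)]
  refine ⟨?_, by linarith, ?_, ?_, ?_⟩
  · intro v
    have hden : HasFDerivAt (fun p : ℝ × ℝ => 1 + k * p.2)
        (k • ContinuousLinearMap.snd ℝ ℝ ℝ) (0, y₂) :=
      (hasFDerivAt_snd.const_mul k).const_add 1
    have hinv := (hasFDerivAt_inv (𝕜 := ℝ) hcne).comp (0, y₂) hden
    simp only [Function.comp_def] at hinv
    have h1 := (hasFDerivAt_fst.mul hinv).sub
      ((hasFDerivAt_fst (p := ((0 : ℝ), y₂))).mul hasFDerivAt_snd)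
    have hsnd : HasFDerivAt (Prod.snd : ℝ × ℝ → ℝ) (ContinuousLinearMap.snd ℝ ℝ ℝ) ((0 : ℝ), y₂) :=
      hasFDerivAt_snd
    have hfst : HasFDerivAt (Prod.fst : ℝ × ℝ → ℝ) (ContinuousLinearMap.fst ℝ ℝ ℝ) ((0 : ℝ), y₂) :=
      hasFDerivAt_fst
    have h2 := ((hfst.mul (hsnd.mul hsnd)).sub (hsnd.const_mul m)).add_const u
    have H := (HasFDerivAt.prodMk h1 h2)
    simp only [div_eq_mul_inv, pow_two]
    rw [HasFDerivAt.fderiv (f := fun p : ℝ × ℝ => (p.1 * (1 + k * p.2)⁻¹ - p.1 * p.2, p.1 * (p.2 * p.2) - m * p.2 + u)) H]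
    simp [ContinuousLinearMap.prod_apply, Prod.ext_iff, mul_comm]
    constructor
    · field_simp
    · ring
  · intro h
    have hylt : y₂ < y₃ := by
      rw [hy₂, div_lt_iff₀ hm]
      rw [hu₀] at h; linarith
    have key : y₂ * (1 + k * y₂) < 1 := by
      nlinarith [mul_pos hk (mul_pos (sub_pos.mpr hylt) (add_pos hy₃pos hy₂pos))]
    rw [sub_pos, lt_div_iff₀ hcpos]
    linarith
  · intro h
    have hygt : y₃ < y₂ := by
      rw [hy₂, lt_div_iff₀ hm]
      rw [hu₀] at h; linarith
    have key : 1 < y₂ * (1 + k * y₂) := by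
      nlinarith [mul_pos hk (mul_pos (sub_pos.mpr hygt) (add_pos hy₂pos hy₃pos))]
    rw [sub_neg, div_lt_iff₀ hcpos]
    linarith
  · intro h
    have hyy : y₂ = y₃ := by
      rw [hy₂, h, hu₀, mul_comm, mul_div_assoc, div_self (ne_of_gt hm), mul_one]
    rw [sub_eq_zero, div_eq_iff hcne, hyy]
    linear_combination -hroot
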